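/- Fix a time horizon n ≥ 1, real numbers α ≥ 0, λ ≥ 2 and 𝓘 ≥ 0, and for each round t ∈ {1,…,n} functions Δ_t : S × A → ℝ with Δ_t(s,a) ≥ 0 and I_t : S × A → ℝ with I_t(s,a) > 0, inducing for each t the round-t functionals reg_t, info_t and ratios Ψ_{t,α}^λ on policies. For each t let π_t be a policy minimizing Ψ_{t,α}^2, and suppose that for each t there exists a policy q_t with Ψ_{t,α}^λ(q_t) ≤ 𝓘. Then Σ_{t=1}^n reg_t(π_t) ≤ n·α + 2^{1−2/λ} · 𝓘^{1/λ} · n^{1−1/λ} · (Σ_{t=1}^n info_t(π_t))^{1/λ}. -/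

import Mathlib

open Finset


lemma quad_coeff_nonneg (A B : ℝ) (hB : 0 ≤ B)
    (h : ∀ γ : ℝ, 0 ≤ γ → γ ≤ 1 → 0 ≤ γ * A + γ^2 * B) : 0 ≤ A := by
  by_contra h'
  push_neg at h'
  rcases eq_or_lt_of_le hB with hB0 | hB0
  · have := h 1 zero_le_one le_rfl
    nlinarith
  · set γ := min 1 (-A / (2*B)) with hγ
    have hA : 0 < -A / (2*B) := div_pos (by linarith) (by linarith)
    have hγ0 : 0 < γ := lt_min one_pos hA
    have hγ1 : γ ≤ 1 := min_le_left _ _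
    have hγ2 : γ ≤ -A / (2*B) := min_le_right _ _
    have h3 := h γ hγ0.le hγ1
    have hgb : γ * (2*B) ≤ -A := by
      rw [le_div_iff₀ (by linarith)] at hγ2
      linarith
    nlinarith

open Real in
/-- Key per-round bound. -/
lemma key_bound (x w u v Ibd lam : ℝ) (hx : 0 ≤ x) (hw : 0 ≤ w) (hu : 0 < u) (hv : 0 < v)
    (hIbd : 0 ≤ Ibd) (hlam : 2 ≤ lam)
    (hmin : ∀ γ : ℝ, 0 ≤ γ → γ ≤ 1 →
      x^2 * ((1-γ)*u + γ*v) ≤ ((1-γ)*x + γ*w)^2 * u)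
    (hwI : w ^ lam ≤ Ibd * v) :
    x ≤ 2 ^ (1 - 2/lam) * Ibd ^ (1/lam) * u ^ (1/lam) := by
  have hlam0 : 0 < lam := by linarith
  -- step 1 : x * (u + v) ≤ 2 * u * w
  have step1 : x * (u + v) ≤ 2 * u * w := by
    have hA : 0 ≤ 2*u*x*(w-x) - x^2*(v-u) := by
      apply quad_coeff_nonneg _ (u*(w-x)^2) (by positivity)
      intro γ hγ0 hγ1
      have := hmin γ hγ0 hγ1
      nlinarith
    rcases eq_or_lt_of_le hx with hx0 | hx0
    · nlinarith
    · have h2 : x * (x*(u+v)) ≤ x * (2*u*w) := by nlinarith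
      exact (mul_le_mul_iff_right₀ hx0).mp h2
  -- step 2 : x ^ lam ≤ 2^(lam-2) * Ibd * u
  have huv : 0 < u + v := by linarith
  have step2 : x ^ lam ≤ 2 ^ (lam - 2) * Ibd * u := by
    have h1 : x ≤ 2 * u * w / (u + v) := by
      rw [le_div_iff₀ huv]; linarith
    have h2 : x ^ lam ≤ (2 * u * w / (u + v)) ^ lam :=
      rpow_le_rpow hx h1 hlam0.le
    have h3 : (2 * u * w / (u + v)) ^ lam
        = 2 ^ lam * u ^ lam * w ^ lam / (u + v) ^ lam := by
      rw [div_rpow (by positivity) huv.le, mul_rpow (by positivity) hw,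
        mul_rpow (by norm_num) hu.le]
    -- (u+v)^lam ≥ 4 * u^(lam-1) * v
    have h4 : 4 * (u ^ (lam - 1) * v) ≤ (u + v) ^ lam := by
      have e1 : (u + v) ^ lam = (u + v) ^ (lam - 2) * (u + v) ^ (2:ℝ) := by
        rw [← rpow_add huv]; ring_nf
      have e2 : u ^ (lam - 2) ≤ (u + v) ^ (lam - 2) :=
        rpow_le_rpow hu.le (by linarith) (by linarith)
      have e3 : 4 * (u * v) ≤ (u + v) ^ (2:ℝ) := by
        rw [rpow_two]; nlinarith [sq_nonneg (u - v)]
      have e4 : u ^ (lam - 1) = u ^ (lam - 2) * u := by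
        rw [← rpow_add_one hu.ne' (lam - 2)]; ring_nf
      calc 4 * (u ^ (lam - 1) * v) = u ^ (lam-2) * (4 * (u * v)) := by rw [e4]; ring
        _ ≤ (u + v) ^ (lam - 2) * ((u+v) ^ (2:ℝ)) := by
            apply mul_le_mul e2 e3 (by positivity) (by positivity)
        _ = (u + v) ^ lam := e1.symm
    -- combine
    have h5 : 2 ^ lam * u ^ lam * w ^ lam / (u + v) ^ lam ≤ 2 ^ (lam - 2) * Ibd * u := by
      rw [div_le_iff₀ (by positivity)]
      have hul : u ^ lam = u ^ (lam - 1) * u := by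
        rw [← rpow_add_one hu.ne' (lam-1)]; ring_nf
      have h2l : (2:ℝ) ^ lam = 2 ^ (lam - 2) * 4 := by
        rw [show (4:ℝ) = 2 ^ (2:ℝ) by rw [rpow_two]; norm_num, ← rpow_add (by norm_num)]
        ring_nf
      calc 2 ^ lam * u ^ lam * w ^ lam ≤ 2 ^ lam * u ^ lam * (Ibd * v) := by
            apply mul_le_mul_of_nonneg_left hwI (by positivity)
        _ = 2 ^ (lam - 2) * Ibd * u * (4 * (u ^ (lam - 1) * v)) := by
            rw [hul, h2l]; ring
        _ ≤ 2 ^ (lam - 2) * Ibd * u * ((u + v) ^ lam) := by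
            apply mul_le_mul_of_nonneg_left h4 (by positivity)
    calc x ^ lam ≤ _ := h2
      _ = _ := h3
      _ ≤ _ := h5
  -- step 3 : take lam-th root
  have hxl : (x ^ lam) ^ (1/lam) = x := by
    rw [← rpow_mul hx, mul_one_div_cancel hlam0.ne', rpow_one]
  calc x = (x ^ lam) ^ (1/lam) := hxl.symm
    _ ≤ (2 ^ (lam - 2) * Ibd * u) ^ (1/lam) := by
        apply rpow_le_rpow (rpow_nonneg hx lam) step2 (by positivity)
    _ = 2 ^ (1 - 2/lam) * Ibd ^ (1/lam) * u ^ (1/lam) := by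
        rw [mul_rpow (by positivity) hu.le, mul_rpow (by positivity) hIbd,
          ← rpow_mul (by norm_num : (0:ℝ) ≤ 2), mul_one_div, sub_div,
          div_self hlam0.ne']



/-- A policy assigns to each context `s` a probability vector over the actions `A`. -/
structure Policy (S A : Type) [Fintype S] [Fintype A] where
  prob : S → A → ℝ
  nonneg : ∀ s a, 0 ≤ prob s a
  sum_eq_one : ∀ s, ∑ a, prob s a = 1

/-- Expected one-step regret of a policy under context distribution `p`. -/
noncomputable def reg {S A : Type} [Fintype S] [Fintype A]
    (p : S → ℝ) (Δ : S → A → ℝ) (π : Policy S A) : ℝ :=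
  ∑ s, p s * ∑ a, Δ s a * π.prob s a

/-- Expected information gain of a policy under context distribution `p`. -/
noncomputable def info {S A : Type} [Fintype S] [Fintype A]
    (p : S → ℝ) (I : S → A → ℝ) (π : Policy S A) : ℝ :=
  ∑ s, p s * ∑ a, I s a * π.prob s a

/-- The `(α, λ)`-marginal information ratio `Ψ_α^λ(π)`. -/
noncomputable def ratio {S A : Type} [Fintype S] [Fintype A]
    (p : S → ℝ) (Δ I : S → A → ℝ) (α lam : ℝ) (π : Policy S A) : ℝ :=
  (max 0 (reg p Δ π - α)) ^ lam / info p I π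

/-- mixture of two policies -/
def Policy.mix {S A : Type} [Fintype S] [Fintype A] (γ : ℝ) (h0 : 0 ≤ γ) (h1 : γ ≤ 1)
    (π q : Policy S A) : Policy S A where
  prob := fun s a => (1 - γ) * π.prob s a + γ * q.prob s a
  nonneg := fun s a => by
    have h2 := π.nonneg s a; have h3 := q.nonneg s a
    nlinarith
  sum_eq_one := fun s => by
    rw [Finset.sum_add_distrib, ← Finset.mul_sum, ← Finset.mul_sum,
      π.sum_eq_one s, q.sum_eq_one s]
    ring

lemma reg_mix {S A : Type} [Fintype S] [Fintype A] (p : S → ℝ) (Δ : S → A → ℝ)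
    (γ : ℝ) (h0 : 0 ≤ γ) (h1 : γ ≤ 1) (π q : Policy S A) :
    reg p Δ (Policy.mix γ h0 h1 π q) = (1 - γ) * reg p Δ π + γ * reg p Δ q := by
  unfold reg Policy.mix
  have hinner : ∀ s, (∑ a, Δ s a * ((1-γ) * π.prob s a + γ * q.prob s a))
      = (1-γ) * (∑ a, Δ s a * π.prob s a) + γ * (∑ a, Δ s a * q.prob s a) := by
    intro s
    rw [Finset.mul_sum, Finset.mul_sum, ← Finset.sum_add_distrib]
    exact Finset.sum_congr rfl fun a _ => by ring
  calc ∑ s, p s * ∑ a, Δ s a * ((1-γ) * π.prob s a + γ * q.prob s a)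
      = ∑ s, ((1-γ) * (p s * ∑ a, Δ s a * π.prob s a)
          + γ * (p s * ∑ a, Δ s a * q.prob s a)) :=
        Finset.sum_congr rfl fun s _ => by rw [hinner s]; ring
    _ = (1-γ) * (∑ s, p s * ∑ a, Δ s a * π.prob s a)
          + γ * (∑ s, p s * ∑ a, Δ s a * q.prob s a) := by
        rw [Finset.sum_add_distrib, ← Finset.mul_sum, ← Finset.mul_sum]

lemma info_pos {S A : Type} [Fintype S] [Fintype A]
    (p : S → ℝ) (hp0 : ∀ s, 0 ≤ p s) (hpex : ∃ s, 0 < p s)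
    (I : S → A → ℝ) (hI : ∀ s a, 0 < I s a) (π : Policy S A) :
    0 < info p I π := by
  obtain ⟨s0, hs0⟩ := hpex
  have hinner : ∀ s, (0:ℝ) ≤ ∑ a, I s a * π.prob s a := fun s =>
    Finset.sum_nonneg fun a _ => mul_nonneg (hI s a).le (π.nonneg s a)
  have hinner0 : 0 < ∑ a, I s0 a * π.prob s0 a := by
    have hex : ∃ a, 0 < π.prob s0 a := by
      by_contra hc
      push_neg at hc
      have : ∑ a, π.prob s0 a = 0 :=
        Finset.sum_eq_zero fun a _ => le_antisymm (hc a) (π.nonneg s0 a)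
      rw [π.sum_eq_one s0] at this
      norm_num at this
    obtain ⟨a0, ha0⟩ := hex
    apply Finset.sum_pos' (fun a _ => mul_nonneg (hI s0 a).le (π.nonneg s0 a))
    exact ⟨a0, Finset.mem_univ a0, mul_pos (hI s0 a0) ha0⟩
  apply Finset.sum_pos' (fun s _ => mul_nonneg (hp0 s) (hinner s))
  exact ⟨s0, Finset.mem_univ s0, mul_pos hs0 hinner0⟩

-- Jensen step
open Real in
lemma sum_rpow_le {n : ℕ} (hn : 1 ≤ n) (f : Fin n → ℝ) (hf : ∀ t, 0 ≤ f t)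
    (lam : ℝ) (hlam : 2 ≤ lam) :
    ∑ t, (f t) ^ (1/lam) ≤ (n:ℝ) ^ (1 - 1/lam) * (∑ t, f t) ^ (1/lam) := by
  have hlam0 : 0 < lam := by linarith
  have hn0 : (0:ℝ) < n := by exact_mod_cast hn
  have key := Real.rpow_arith_mean_le_arith_mean_rpow Finset.univ
    (fun _ : Fin n => (n:ℝ)⁻¹) (fun t => (f t) ^ (1/lam))
    (fun i _ => by positivity)
    (by simp [Finset.card_univ]; field_simp)
    (fun i _ => rpow_nonneg (hf i) _) (by linarith : (1:ℝ) ≤ lam)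
  have hsimp : ∀ t : Fin n, ((f t) ^ (1/lam)) ^ lam = f t := fun t => by
    rw [← rpow_mul (hf t), one_div_mul_cancel hlam0.ne', rpow_one]
  simp only [hsimp] at key
  -- key : (∑ (n:ℝ)⁻¹ * f t ^ (1/lam)) ^ lam ≤ ∑ (n:ℝ)⁻¹ * f t
  rw [← Finset.mul_sum, ← Finset.mul_sum] at key
  have hS0 : 0 ≤ (n:ℝ)⁻¹ * ∑ t, (f t) ^ (1/lam) :=
    mul_nonneg (by positivity) (Finset.sum_nonneg fun t _ => rpow_nonneg (hf t) _)
  have key2 : (n:ℝ)⁻¹ * ∑ t, (f t) ^ (1/lam)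
      ≤ ((n:ℝ)⁻¹ * ∑ t, f t) ^ (1/lam) := by
    have h1 : (((n:ℝ)⁻¹ * ∑ t, (f t) ^ (1/lam)) ^ lam) ^ (1/lam)
        ≤ ((n:ℝ)⁻¹ * ∑ t, f t) ^ (1/lam) :=
      rpow_le_rpow (rpow_nonneg hS0 _) key (by positivity)
    rwa [← rpow_mul hS0, mul_one_div_cancel hlam0.ne', rpow_one] at h1
  have h2 : ∑ t, (f t) ^ (1/lam) ≤ (n:ℝ) * ((n:ℝ)⁻¹ * ∑ t, f t) ^ (1/lam) := by
    rw [← mul_le_mul_iff_right₀ (show (0:ℝ) < (n:ℝ)⁻¹ by positivity)]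
    calc (n:ℝ)⁻¹ * ∑ t, (f t) ^ (1/lam) ≤ ((n:ℝ)⁻¹ * ∑ t, f t) ^ (1/lam) := key2
      _ = (n:ℝ)⁻¹ * ((n:ℝ) * ((n:ℝ)⁻¹ * ∑ t, f t) ^ (1/lam)) := by
          field_simp
  calc ∑ t, (f t) ^ (1/lam) ≤ (n:ℝ) * ((n:ℝ)⁻¹ * ∑ t, f t) ^ (1/lam) := h2
    _ = (n:ℝ) ^ (1 - 1/lam) * (∑ t, f t) ^ (1/lam) := by
        have hpow : ((n:ℝ)⁻¹) ^ (1/lam) = (n:ℝ) ^ (-(1/lam)) := by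
          rw [← rpow_neg_one (n:ℝ), ← rpow_mul hn0.le]
          norm_num
        have hmul : (n:ℝ) * (n:ℝ) ^ (-(1/lam)) = (n:ℝ) ^ (1 - 1/lam) := by
          rw [show (1:ℝ) - 1/lam = 1 + -(1/lam) by ring, rpow_add hn0, rpow_one]
        rw [mul_rpow (by positivity) (Finset.sum_nonneg fun t _ => hf t),
          hpow, ← mul_assoc, hmul]

lemma info_eq_reg {S A : Type} [Fintype S] [Fintype A]
    (p : S → ℝ) (I : S → A → ℝ) (π : Policy S A) : info p I π = reg p I π := rfl


/-- Deterministic form of Theorem 3.1 (generic regret bound for contextual IDS):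
if at each round `t` the policy `π t` minimizes the `(α,2)`-marginal information ratio
and some policy has `(α,λ)`-ratio at most `𝓘`, then
`∑ reg_t(π_t) ≤ n·α + 2^(1−2/λ)·𝓘^(1/λ)·n^(1−1/λ)·(∑ info_t(π_t))^(1/λ)`. -/
theorem stmt_4 {S A : Type} [Fintype S] [Fintype A] [Nonempty S] [Nonempty A]
    (p : S → ℝ) (hp0 : ∀ s, 0 ≤ p s) (hp1 : ∑ s, p s = 1) (hpex : ∃ s, 0 < p s)
    (n : ℕ) (hn : 1 ≤ n)
    (α lam Ibd : ℝ) (hα : 0 ≤ α) (hlam : 2 ≤ lam) (hIbd : 0 ≤ Ibd)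
    (Δ I : Fin n → S → A → ℝ)
    (hΔ : ∀ t s a, 0 ≤ Δ t s a) (hI : ∀ t s a, 0 < I t s a)
    (π : Fin n → Policy S A)
    (hmin : ∀ t, ∀ q : Policy S A,
      ratio p (Δ t) (I t) α 2 (π t) ≤ ratio p (Δ t) (I t) α 2 q)
    (hq : ∀ t, ∃ q : Policy S A, ratio p (Δ t) (I t) α lam q ≤ Ibd) :
    ∑ t, reg p (Δ t) (π t) ≤
      (n : ℝ) * α + 2 ^ (1 - 2 / lam) * Ibd ^ (1 / lam) * (n : ℝ) ^ (1 - 1 / lam) *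
        (∑ t, info p (I t) (π t)) ^ (1 / lam) := by
  have r2 : ∀ y : ℝ, y ^ (2:ℝ) = y ^ (2:ℕ) := fun y => by
    rw [show (2:ℝ) = ((2:ℕ):ℝ) by norm_num, Real.rpow_natCast]
  set C : ℝ := 2 ^ (1 - 2/lam) * Ibd ^ (1/lam) with hC
  have hC0 : 0 ≤ C :=
    mul_nonneg (Real.rpow_nonneg (by norm_num) _) (Real.rpow_nonneg hIbd _)
  set u : Fin n → ℝ := fun t => info p (I t) (π t) with hu
  have hupos : ∀ t, 0 < u t := fun t => info_pos p hp0 hpex (I t) (hI t) (π t)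
  set x : Fin n → ℝ := fun t => max 0 (reg p (Δ t) (π t) - α) with hx
  have hx0 : ∀ t, 0 ≤ x t := fun t => le_max_left _ _
  -- per-round bound
  have hround : ∀ t, x t ≤ C * (u t) ^ (1/lam) := by
    intro t
    obtain ⟨q, hqle⟩ := hq t
    set w : ℝ := max 0 (reg p (Δ t) q - α) with hw
    set v : ℝ := info p (I t) q with hv
    have hvpos : 0 < v := info_pos p hp0 hpex (I t) (hI t) q
    have hwI : w ^ lam ≤ Ibd * v := by
      have : w ^ lam / v ≤ Ibd := hqle
      rw [div_le_iff₀ hvpos] at this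
      linarith
    have hmix : ∀ γ : ℝ, 0 ≤ γ → γ ≤ 1 →
        (x t)^2 * ((1-γ) * u t + γ * v) ≤ ((1-γ) * x t + γ * w)^2 * u t := by
      intro γ h0 h1
      have hmixinfo : info p (I t) (Policy.mix γ h0 h1 (π t) q)
          = (1-γ) * u t + γ * v := by
        exact reg_mix p (I t) γ h0 h1 (π t) q
      have hmixreg : reg p (Δ t) (Policy.mix γ h0 h1 (π t) q)
          = (1-γ) * reg p (Δ t) (π t) + γ * reg p (Δ t) q :=
        reg_mix p (Δ t) γ h0 h1 (π t) q
      have hmixpos : 0 < (1-γ) * u t + γ * v := by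
        rw [← hmixinfo]
        exact info_pos p hp0 hpex (I t) (hI t) _
      have h2 := hmin t (Policy.mix γ h0 h1 (π t) q)
      unfold ratio at h2
      rw [div_le_div_iff₀ (hupos t) (by rw [hmixinfo]; exact hmixpos)] at h2
      rw [hmixinfo, hmixreg, r2, r2] at h2
      -- h2 : x t ^ 2 * ((1-γ) u + γ v) ≤ (max 0 ((1-γ)reg + γ reg' - α))^2 * u t
      have hM : max 0 ((1-γ) * reg p (Δ t) (π t) + γ * reg p (Δ t) q - α)
          ≤ (1-γ) * x t + γ * w := by
        apply max_le
        · have := hx0 t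
          have hw0 : (0:ℝ) ≤ w := le_max_left _ _
          nlinarith
        · have h3 : reg p (Δ t) (π t) - α ≤ x t := le_max_right _ _
          have h4 : reg p (Δ t) q - α ≤ w := le_max_right _ _
          nlinarith
      calc (x t)^2 * ((1-γ) * u t + γ * v) ≤ _ := h2
        _ ≤ ((1-γ) * x t + γ * w)^2 * u t := by
            apply mul_le_mul_of_nonneg_right _ (hupos t).le
            exact pow_le_pow_left₀ (le_max_left _ _) hM 2
    exact key_bound (x t) w (u t) v Ibd lam (hx0 t) (le_max_left _ _)
      (hupos t) hvpos hIbd hlam hmix hwI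
  -- sum up
  have hsum1 : ∑ t, reg p (Δ t) (π t) ≤ (n:ℝ) * α + ∑ t, x t := by
    have : ∀ t : Fin n, reg p (Δ t) (π t) ≤ α + x t := fun t => by
      have := le_max_right 0 (reg p (Δ t) (π t) - α)
      simp only [hx]
      linarith
    calc ∑ t, reg p (Δ t) (π t) ≤ ∑ t : Fin n, (α + x t) :=
          Finset.sum_le_sum fun t _ => this t
      _ = (n:ℝ) * α + ∑ t, x t := by
          rw [Finset.sum_add_distrib, Finset.sum_const, Finset.card_univ,
            Fintype.card_fin, nsmul_eq_mul]
  have hsum2 : ∑ t, x t ≤ C * ((n:ℝ) ^ (1 - 1/lam) * (∑ t, u t) ^ (1/lam)) := by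
    calc ∑ t, x t ≤ ∑ t, C * (u t) ^ (1/lam) :=
          Finset.sum_le_sum fun t _ => hround t
      _ = C * ∑ t, (u t) ^ (1/lam) := by rw [Finset.mul_sum]
      _ ≤ C * ((n:ℝ) ^ (1 - 1/lam) * (∑ t, u t) ^ (1/lam)) := by
          apply mul_le_mul_of_nonneg_left _ hC0
          exact sum_rpow_le hn u (fun t => (hupos t).le) lam hlam
  calc ∑ t, reg p (Δ t) (π t) ≤ (n:ℝ) * α + ∑ t, x t := hsum1
    _ ≤ (n:ℝ) * α + C * ((n:ℝ) ^ (1 - 1/lam) * (∑ t, u t) ^ (1/lam)) := by linarith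
    _ = (n : ℝ) * α + 2 ^ (1 - 2 / lam) * Ibd ^ (1 / lam) * (n : ℝ) ^ (1 - 1 / lam) *
        (∑ t, info p (I t) (π t)) ^ (1 / lam) := by rw [hC]; ring
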